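/- Let d ≥ 1 and n ≥ 1 be natural numbers and let A, B be d×d complex matrices. Then det(I_{nd} + 𝟙_n ⊗ A + I_n ⊗ B) = det(I_d + n•A + B) · (det(I_d + B))^(n−1), where ⊗ denotes the Kronecker product, 𝟙_n the n×n all-ones matrix, and I_n, I_d, I_{nd} identity matrices of the indicated sizes. -/
import Mathlib


open Matrix Kronecker

/-- The n×n all-ones matrix over ℂ. -/
def onesMatC (n : ℕ) : Matrix (Fin n) (Fin n) ℂ := Matrix.of fun _ _ => 1

def Pmat (n : ℕ) [NeZero n] : Matrix (Fin n) (Fin n) ℂ :=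
  Matrix.of fun i k => if k = 0 then 1 else (if i = 0 then (1:ℂ) else 0) - (if i = k then 1 else 0)

noncomputable def Qmat (n : ℕ) [NeZero n] : Matrix (Fin n) (Fin n) ℂ :=
  Matrix.of fun i j => (n:ℂ)⁻¹ - if i = 0 then 0 else (if i = j then (1:ℂ) else 0)

def dvec (n : ℕ) [NeZero n] : Fin n → ℂ := fun i => if i = 0 then (n:ℂ) else 0

lemma QP (n : ℕ) [NeZero n] : Qmat n * Pmat n = 1 := by
  ext i k
  rw [Matrix.mul_apply, Matrix.one_apply]
  simp only [Pmat, Qmat, Matrix.of_apply]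
  by_cases hk : k = 0 <;> by_cases hi : i = 0 <;>
    simp [hk, hi, sub_mul, mul_sub, Finset.sum_sub_distrib, Finset.sum_ite_eq,
      Finset.sum_ite_eq', Finset.card_univ, eq_comm]

lemma PQ (n : ℕ) [NeZero n] : Pmat n * Qmat n = 1 := mul_eq_one_comm.mp (QP n)

lemma JP (n : ℕ) [NeZero n] : onesMatC n * Pmat n = Pmat n * Matrix.diagonal (dvec n) := by
  ext i k
  rw [Matrix.mul_apply, Matrix.mul_apply]
  simp only [Pmat, onesMatC, dvec, Matrix.of_apply, Matrix.diagonal_apply]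
  by_cases hk : k = 0 <;>
    simp [hk, Finset.sum_sub_distrib, Finset.sum_ite_eq, Finset.sum_ite_eq',
      Finset.card_univ, eq_comm]

lemma PDQ (n : ℕ) [NeZero n] :
    Pmat n * Matrix.diagonal (dvec n) * Qmat n = onesMatC n := by
  rw [← JP, Matrix.mul_assoc, PQ, Matrix.mul_one]

lemma Nblock (n d : ℕ) [NeZero n] (A B : Matrix (Fin d) (Fin d) ℂ) :
    (1 : Matrix (Fin n × Fin d) (Fin n × Fin d) ℂ)
      + (Matrix.diagonal (dvec n)) ⊗ₖ A + (1 : Matrix (Fin n) (Fin n) ℂ) ⊗ₖ B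
    = (Matrix.blockDiagonal fun i : Fin n =>
        (1 : Matrix (Fin d) (Fin d) ℂ) + dvec n i • A + B).submatrix
        (Equiv.prodComm (Fin n) (Fin d)) (Equiv.prodComm (Fin n) (Fin d)) := by
  ext ⟨i, j⟩ ⟨i', j'⟩
  by_cases h : i = i' <;>
    simp [h, Matrix.blockDiagonal_apply, Matrix.one_apply, Matrix.diagonal_apply,
      kroneckerMap_apply, Prod.ext_iff, mul_comm]

/-- Determinant factorization for replica-symmetric block matrices:
`det(I_{nd} + 𝟙_n ⊗ A + I_n ⊗ B) = det(I_d + n•A + B) · det(I_d + B)^(n−1)`. -/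
theorem stmt_3 (d n : ℕ) (hd : 1 ≤ d) (hn : 1 ≤ n)
    (A B : Matrix (Fin d) (Fin d) ℂ) :
    ((1 : Matrix (Fin n × Fin d) (Fin n × Fin d) ℂ) +
        onesMatC n ⊗ₖ A + (1 : Matrix (Fin n) (Fin n) ℂ) ⊗ₖ B).det
      = ((1 : Matrix (Fin d) (Fin d) ℂ) + n • A + B).det *
        ((1 : Matrix (Fin d) (Fin d) ℂ) + B).det ^ (n - 1) := by
  haveI : NeZero n := ⟨by omega⟩
  set P := Pmat n with hP
  set Q := Qmat n with hQ
  set Dk := Matrix.diagonal (dvec n) with hDk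
  set N := (1 : Matrix (Fin n × Fin d) (Fin n × Fin d) ℂ)
      + Dk ⊗ₖ A + (1 : Matrix (Fin n) (Fin n) ℂ) ⊗ₖ B with hN
  have e1 : (P ⊗ₖ (1 : Matrix (Fin d) (Fin d) ℂ)) * (Q ⊗ₖ 1) = 1 := by
    rw [← Matrix.mul_kronecker_mul, PQ, Matrix.mul_one, Matrix.one_kronecker_one]
  have e2 : (P ⊗ₖ (1 : Matrix (Fin d) (Fin d) ℂ)) * (Dk ⊗ₖ A) * (Q ⊗ₖ 1)
      = onesMatC n ⊗ₖ A := by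
    rw [← Matrix.mul_kronecker_mul, ← Matrix.mul_kronecker_mul, Matrix.one_mul,
      Matrix.mul_one, hDk, PDQ]
  have e3 : (P ⊗ₖ (1 : Matrix (Fin d) (Fin d) ℂ)) * ((1 : Matrix (Fin n) (Fin n) ℂ) ⊗ₖ B) * (Q ⊗ₖ 1)
      = (1 : Matrix (Fin n) (Fin n) ℂ) ⊗ₖ B := by
    rw [← Matrix.mul_kronecker_mul, ← Matrix.mul_kronecker_mul, Matrix.mul_one,
      Matrix.one_mul, Matrix.mul_one, PQ]
  have key : (P ⊗ₖ (1 : Matrix (Fin d) (Fin d) ℂ)) * N * (Q ⊗ₖ 1)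
      = (1 : Matrix (Fin n × Fin d) (Fin n × Fin d) ℂ) +
        onesMatC n ⊗ₖ A + (1 : Matrix (Fin n) (Fin n) ℂ) ⊗ₖ B := by
    rw [hN, Matrix.mul_add, Matrix.mul_add, Matrix.add_mul, Matrix.add_mul,
      Matrix.mul_one, e1, e2, e3]
  have dPQ : (P ⊗ₖ (1 : Matrix (Fin d) (Fin d) ℂ)).det * (Q ⊗ₖ (1 : Matrix (Fin d) (Fin d) ℂ)).det = 1 := by
    rw [← Matrix.det_mul, e1, Matrix.det_one]
  have hcongr : ∀ i ∈ Finset.univ.erase (0 : Fin n),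
      ((1 : Matrix (Fin d) (Fin d) ℂ) + dvec n i • A + B).det
        = (fun _ : Fin n => ((1 : Matrix (Fin d) (Fin d) ℂ) + B).det) i := by
    intro i hi
    have : i ≠ 0 := Finset.ne_of_mem_erase hi
    simp [dvec, this]
  have detN : N.det = ((1 : Matrix (Fin d) (Fin d) ℂ) + n • A + B).det *
        ((1 : Matrix (Fin d) (Fin d) ℂ) + B).det ^ (n - 1) := by
    rw [hN, hDk, Nblock, Matrix.det_submatrix_equiv_self, Matrix.det_blockDiagonal,
      ← Finset.mul_prod_erase Finset.univ _ (Finset.mem_univ (0 : Fin n)),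
      Finset.prod_congr rfl hcongr, Finset.prod_const,
      Finset.card_erase_of_mem (Finset.mem_univ _), Finset.card_univ, Fintype.card_fin]
    congr 2
    simp [dvec, Nat.cast_smul_eq_nsmul]
  rw [← key, Matrix.det_mul, Matrix.det_mul, detN, mul_right_comm, dPQ, one_mul]
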